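/- Let G be a finite nonabelian group with maol(G) = 3. Then the set of orders of the inner automorphisms of G is exactly {1, 2, 3}; equivalently, the set of orders of the elements of the central quotient G/ζG is exactly {1, 2, 3}. -/

import Mathlib

/-- `maol G` is the maximum length of an orbit of the natural action of `Aut(G)` on `G`. -/
noncomputable def maol (G : Type*) [Group G] : ℕ :=
  ⨆ g : G, Nat.card (MulAction.orbit (MulAut G) g)

open MulAction Subgroup

namespace MaolAux

set_option linter.unusedSectionVars false

variable {G : Type*} [Group G] [Finite G]

lemma mem_orbit_apply (α : MulAut G) (x : G) : α x ∈ orbit (MulAut G) x :=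
  ⟨α, rfl⟩

lemma card_orbit_le_maol (x : G) : Nat.card (orbit (MulAut G) x) ≤ maol G :=
  le_ciSup (f := fun g : G => Nat.card (orbit (MulAut G) g))
    (Set.Finite.bddAbove (Set.finite_range _)) x

lemma exists_card_orbit_eq_maol :
    ∃ x : G, Nat.card (orbit (MulAut G) x) = maol G := by
  obtain ⟨x, hx⟩ := Finite.exists_max (fun g : G => Nat.card (orbit (MulAut G) g))
  exact ⟨x, le_antisymm (card_orbit_le_maol x) (ciSup_le hx)⟩

lemma four_le_card_orbit {α : MulAut G} {x : G}
    (h2 : α (α x) ≠ x) (h3 : α (α (α x)) ≠ x) :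
    4 ≤ Nat.card (orbit (MulAut G) x) := by
  have h1 : α x ≠ x := fun h => h2 (by rw [h, h])
  have h12 : α x ≠ α (α x) := fun h => h1 (α.injective h).symm
  have h13 : α x ≠ α (α (α x)) := fun h => h2 (α.injective h).symm
  have h23 : α (α x) ≠ α (α (α x)) := fun h => h1 (α.injective (α.injective h)).symm
  classical
  have hc : ({x, α x, α (α x), α (α (α x))} : Finset G).card = 4 := by
    rw [Finset.card_insert_of_notMem (by simp [h1.symm, h2.symm, h3.symm]),
      Finset.card_insert_of_notMem (by simp [h12, h13]),
      Finset.card_insert_of_notMem (by simp [h23]), Finset.card_singleton]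
  calc (4:ℕ) = ({x, α x, α (α x), α (α (α x))} : Finset G).card := hc.symm
    _ = (({x, α x, α (α x), α (α (α x))} : Finset G) : Set G).ncard := by
        rw [Set.ncard_coe_finset]
    _ ≤ (orbit (MulAut G) x).ncard := by
        apply Set.ncard_le_ncard _ (Set.toFinite _)
        intro y hy
        simp only [Finset.coe_insert, Set.mem_insert_iff, Finset.coe_singleton,
          Set.mem_singleton_iff] at hy
        rcases hy with rfl | rfl | rfl | rfl
        · exact mem_orbit_self _
        · exact ⟨α, rfl⟩
        · exact ⟨α * α, rfl⟩
        · exact ⟨α * α * α, rfl⟩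
    _ = Nat.card (orbit (MulAut G) x) := (Nat.card_coe_set_eq _).symm

variable (hm : maol G = 3)
include hm

lemma period (α : MulAut G) (x : G) : α (α x) = x ∨ α (α (α x)) = x := by
  by_contra h
  push_neg at h
  have h4 := four_le_card_orbit h.1 h.2
  have h3 := card_orbit_le_maol (G := G) x
  omega

lemma sq_or_cube_comm (g x : G) :
    Commute (g^2) x ∨ Commute (g^3) x := by
  rcases period hm (MulAut.conj g) x with h | h
  · left
    have h2 : MulAut.conj (g^2) x = x := by
      rw [map_pow, pow_two, MulAut.mul_apply]; exact h
    rw [MulAut.conj_apply, mul_inv_eq_iff_eq_mul] at h2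
    exact h2
  · right
    have h2 : MulAut.conj (g^3) x = x := by
      rw [map_pow, pow_succ, pow_two, MulAut.mul_apply, MulAut.mul_apply]; exact h
    rw [MulAut.conj_apply, mul_inv_eq_iff_eq_mul] at h2
    exact h2

lemma sq_or_cube_mem_center (g : G) :
    g^2 ∈ center G ∨ g^3 ∈ center G := by
  by_contra h
  push_neg at h
  obtain ⟨h2, h3⟩ := h
  rw [Subgroup.mem_center_iff] at h2 h3
  push_neg at h2 h3
  obtain ⟨a, ha⟩ := h2
  obtain ⟨b, hb⟩ := h3
  have ha' : ¬ Commute (g^2) a := fun h => ha h.symm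
  have hb' : ¬ Commute (g^3) b := fun h => hb h.symm
  have hA : Commute (g^3) a := (sq_or_cube_comm hm g a).resolve_left ha'
  have hB : Commute (g^2) b := (sq_or_cube_comm hm g b).resolve_right hb'
  rcases sq_or_cube_comm hm g (a*b) with h | h
  · have := h.mul_right hB.inv_right
    rw [mul_inv_cancel_right] at this
    exact ha' this
  · have := hA.inv_right.mul_right h
    rw [inv_mul_cancel_left] at this
    exact hb' this

lemma quot_sq_or_cube (q : G ⧸ center G) : q^2 = 1 ∨ q^3 = 1 := by
  obtain ⟨g, rfl⟩ := QuotientGroup.mk_surjective q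
  rcases sq_or_cube_mem_center hm g with h | h
  · left
    rw [← QuotientGroup.mk_pow, QuotientGroup.eq_one_iff]
    exact h
  · right
    rw [← QuotientGroup.mk_pow, QuotientGroup.eq_one_iff]
    exact h

end MaolAux

namespace MaolAux2
set_option linter.unusedSectionVars false
open MaolAux
variable {G : Type*} [Group G] [Finite G]

/-- conjugacy class as a set -/
def cls (x : G) : Set G := Set.range fun g : G => g * x * g⁻¹

lemma self_mem_cls (x : G) : x ∈ cls x := ⟨1, by group⟩

lemma conj_mem_cls (x g : G) : g * x * g⁻¹ ∈ cls x := ⟨g, rfl⟩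

lemma cls_conj (x g : G) : cls (g * x * g⁻¹) = cls x := by
  ext y
  constructor
  · rintro ⟨h, rfl⟩
    exact ⟨h * g, by group⟩
  · rintro ⟨h, rfl⟩
    exact ⟨h * g⁻¹, by group⟩

lemma cls_subset_orbit (x : G) : cls x ⊆ orbit (MulAut G) x := by
  rintro y ⟨g, rfl⟩
  exact ⟨MulAut.conj g, rfl⟩

lemma mem_centralizer_single {x g : G} :
    g ∈ centralizer ({x} : Set G) ↔ x * g = g * x := by
  rw [Subgroup.mem_centralizer_iff]
  simp

lemma card_cls (x : G) : Nat.card (cls x) = (centralizer ({x} : Set G)).index := by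
  have e : (G ⧸ centralizer ({x} : Set G)) ≃ cls x := by
    refine Equiv.ofBijective (fun q => Quotient.liftOn' q
      (fun g => (⟨g * x * g⁻¹, conj_mem_cls x g⟩ : cls x)) ?_) ⟨?_, ?_⟩
    · intro a b hab
      rw [QuotientGroup.leftRel_apply, mem_centralizer_single] at hab
      apply Subtype.ext
      show a * x * a⁻¹ = b * x * b⁻¹
      calc a * x * a⁻¹ = b * ((a⁻¹*b)⁻¹ * (x * (a⁻¹*b))) * b⁻¹ := by group
        _ = b * ((a⁻¹*b)⁻¹ * ((a⁻¹*b) * x)) * b⁻¹ := by rw [hab]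
        _ = b * x * b⁻¹ := by group
    · intro q1 q2
      refine Quotient.inductionOn₂' q1 q2 ?_
      intro a b hab
      have hab' : a * x * a⁻¹ = b * x * b⁻¹ := congrArg Subtype.val hab
      apply Quotient.sound'
      rw [QuotientGroup.leftRel_apply, mem_centralizer_single]
      calc x * (a⁻¹ * b) = a⁻¹ * (a * x * a⁻¹) * b := by group
        _ = a⁻¹ * (b * x * b⁻¹) * b := by rw [hab']
        _ = (a⁻¹ * b) * x := by group
    · rintro ⟨y, ⟨g, rfl⟩⟩
      exact ⟨QuotientGroup.mk g, rfl⟩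
  rw [← Nat.card_congr e]
  rfl

lemma center_le_centralizer_single (x : G) :
    center G ≤ centralizer ({x} : Set G) := by
  intro z hz
  rw [mem_centralizer_single]
  exact (Subgroup.mem_center_iff.mp hz) x

lemma exists_noncomm {x : G} (hx : x ∉ center G) : ∃ a : G, ¬ (x * a = a * x) := by
  rw [Subgroup.mem_center_iff] at hx
  push_neg at hx
  obtain ⟨a, ha⟩ := hx
  exact ⟨a, fun h => ha h.symm⟩

lemma conj_ne_of_noncomm {x a : G} (h : ¬ (x * a = a * x)) : a * x * a⁻¹ ≠ x := by
  intro he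
  apply h
  have h2 := congrArg (· * a) he
  simp only [inv_mul_cancel_right] at h2
  exact h2.symm

lemma two_le_card_cls {x : G} (hx : x ∉ center G) : 2 ≤ Nat.card (cls x) := by
  classical
  obtain ⟨a, ha⟩ := exists_noncomm hx
  have hne := conj_ne_of_noncomm ha
  have hc : ({x, a * x * a⁻¹} : Finset G).card = 2 := by
    rw [Finset.card_insert_of_notMem (by simp [Ne.symm hne]), Finset.card_singleton]
  calc (2:ℕ) = ({x, a * x * a⁻¹} : Finset G).card := hc.symm
    _ = (({x, a * x * a⁻¹} : Finset G) : Set G).ncard := (Set.ncard_coe_finset _).symm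
    _ ≤ (cls x).ncard := by
        apply Set.ncard_le_ncard _ (Set.toFinite _)
        intro y hy
        simp only [Finset.coe_insert, Set.mem_insert_iff, Finset.coe_singleton,
          Set.mem_singleton_iff] at hy
        rcases hy with rfl | rfl
        · exact self_mem_cls _
        · exact conj_mem_cls _ _
    _ = Nat.card (cls x) := (Nat.card_coe_set_eq _).symm

lemma card_cls_le_three (hm : maol G = 3) (x : G) : Nat.card (cls x) ≤ 3 := by
  have h1 : (cls x).ncard ≤ (orbit (MulAut G) x).ncard :=
    Set.ncard_le_ncard (cls_subset_orbit x) (Set.toFinite _)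
  have h2 := card_orbit_le_maol (G := G) x
  rw [hm, Nat.card_coe_set_eq] at h2
  rw [Nat.card_coe_set_eq]
  omega

lemma exists_orderOf_eq_prime {H : Type*} [Group H] [Finite H] (p : ℕ) [Fact p.Prime]
    (h : p ∣ Nat.card H) : ∃ x : H, orderOf x = p := by
  have := Fintype.ofFinite H
  rw [Nat.card_eq_fintype_card] at h
  exact exists_prime_orderOf_dvd_card p h

lemma four_le_card_of_mem {s : Set G} {a b c d : G}
    (ha : a ∈ s) (hb : b ∈ s) (hc : c ∈ s) (hd : d ∈ s)
    (hab : a ≠ b) (hac : a ≠ c) (had : a ≠ d) (hbc : b ≠ c) (hbd : b ≠ d) (hcd : c ≠ d) :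
    4 ≤ Nat.card s := by
  classical
  have hcard : ({a, b, c, d} : Finset G).card = 4 := by
    rw [Finset.card_insert_of_notMem (by simp [hab, hac, had]),
      Finset.card_insert_of_notMem (by simp [hbc, hbd]),
      Finset.card_insert_of_notMem (by simp [hcd]), Finset.card_singleton]
  calc (4:ℕ) = ({a, b, c, d} : Finset G).card := hcard.symm
    _ = (({a, b, c, d} : Finset G) : Set G).ncard := (Set.ncard_coe_finset _).symm
    _ ≤ s.ncard := by
        apply Set.ncard_le_ncard _ (Set.toFinite _)
        intro y hy
        simp only [Finset.coe_insert, Set.mem_insert_iff, Finset.coe_singleton,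
          Set.mem_singleton_iff] at hy
        rcases hy with rfl | rfl | rfl | rfl <;> assumption
    _ = Nat.card s := (Nat.card_coe_set_eq _).symm

end MaolAux2

namespace MaolAux3
open MaolAux MaolAux2
set_option linter.unusedSectionVars false
variable {G : Type*} [Group G] [Finite G]

lemma card_orbit_dvd_card_aut (x : G) :
    Nat.card (orbit (MulAut G) x) ∣ Nat.card (MulAut G) := by
  rw [Nat.card_congr (orbitEquivQuotientStabilizer (MulAut G) x)]
  exact Subgroup.index_dvd_card _

section part3
variable (hm : maol G = 3) (hexp2 : ∀ q : G ⧸ center G, q^2 = 1)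
include hm hexp2

lemma not_two_eq_ord : ¬ (3 : ℕ) ∣ Nat.card (G ⧸ center G) := by
  intro h
  obtain ⟨q, hq⟩ := exists_orderOf_eq_prime (H := G ⧸ center G) 3 h
  have h1 : q ^ 2 = 1 := hexp2 q
  have := orderOf_dvd_of_pow_eq_one h1
  rw [hq] at this
  omega

lemma card_cls_eq_two {x : G} (hx : x ∉ center G) : Nat.card (cls x) = 2 := by
  have h2 := two_le_card_cls hx
  have h3 := card_cls_le_three hm x
  rcases (by omega : Nat.card (cls x) = 2 ∨ Nat.card (cls x) = 3) with h | h
  · exact h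
  · exfalso
    apply not_two_eq_ord hm hexp2
    rw [← h, card_cls]
    have : (centralizer ({x} : Set G)).index ∣ (center G).index :=
      Subgroup.index_dvd_of_le (center_le_centralizer_single x)
    exact this
end part3

end MaolAux3

namespace MaolAux3b
open MaolAux MaolAux2 MaolAux3
set_option linter.unusedSectionVars false
variable {G : Type*} [Group G] [Finite G]
variable (hm : maol G = 3) (hexp2 : ∀ q : G ⧸ center G, q^2 = 1)
include hm hexp2

lemma cls_pair {x a : G} (hx : x ∉ center G) (ha : ¬ (x * a = a * x)) :
    cls x = {x, a * x * a⁻¹} := by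
  symm
  apply Set.eq_of_subset_of_ncard_le
  · intro y hy
    rcases hy with rfl | hy
    · exact self_mem_cls _
    · rw [Set.mem_singleton_iff] at hy
      subst hy
      exact conj_mem_cls _ _
  · have h2 := card_cls_eq_two hm hexp2 hx
    rw [← Nat.card_coe_set_eq, h2]
    have : ({x, a * x * a⁻¹} : Set G).ncard = 2 :=
      Set.ncard_pair (Ne.symm (conj_ne_of_noncomm ha))
    omega
  · exact Set.toFinite _

lemma orbit_mem_cls {x : G} (hx : x ∉ center G) (β : MulAut G) : β x ∈ cls x := by
  obtain ⟨a, ha⟩ := exists_noncomm hx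
  have hpair := cls_pair hm hexp2 hx ha
  by_contra hu
  -- u = β x, u' = β (a x a⁻¹)
  set u := β x with hu_def
  set c := β a with hc_def
  have hu' : β (a * x * a⁻¹) = c * u * c⁻¹ := by
    simp [hu_def, hc_def, map_mul, map_inv]
  have hxne : x ≠ a * x * a⁻¹ := Ne.symm (conj_ne_of_noncomm ha)
  have huu' : u ≠ c * u * c⁻¹ := by
    intro h
    exact hxne (β.injective (by rw [hu', ← h]))
  have hux : u ≠ x := fun h => hu (h ▸ self_mem_cls x)
  have hux' : u ≠ a * x * a⁻¹ := by
    intro h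
    rw [hpair] at hu
    exact hu (by rw [h]; exact Set.mem_insert_of_mem _ rfl)
  have hu'x : c * u * c⁻¹ ≠ x := by
    intro h
    -- then u = c⁻¹ x c ∈ cls x
    apply hu
    rw [hpair]
    have : u = c⁻¹ * x * c := by
      rw [← h]; group
    rw [this, ← hpair]
    exact ⟨c⁻¹, by group⟩
  have hu'x' : c * u * c⁻¹ ≠ a * x * a⁻¹ := by
    intro h
    apply hu
    have : u = c⁻¹ * (a * x * a⁻¹) * c := by rw [← h]; group
    rw [this, ← cls_conj x a]
    exact ⟨c⁻¹, by group⟩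
  -- four distinct elements of the orbit
  have h4 : 4 ≤ Nat.card (orbit (MulAut G) x) := by
    apply four_le_card_of_mem (a := x) (b := a*x*a⁻¹) (c := u) (d := c*u*c⁻¹)
      (cls_subset_orbit x (self_mem_cls x)) (cls_subset_orbit x (conj_mem_cls x a))
      ⟨β, rfl⟩ _ hxne (Ne.symm hux) (Ne.symm hu'x) (Ne.symm hux') (Ne.symm hu'x') huu'
    · rw [← hu']
      refine ⟨β * MulAut.conj a, ?_⟩
      show β (MulAut.conj a x) = β (a * x * a⁻¹)
      rw [MulAut.conj_apply]
  have h3 := card_orbit_le_maol (G := G) x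
  omega

lemma aut_sq_fix_noncentral {x : G} (hx : x ∉ center G) (α : MulAut G) : α (α x) = x := by
  obtain ⟨a, ha⟩ := exists_noncomm hx
  have hpair := cls_pair hm hexp2 hx ha
  have h1 := orbit_mem_cls hm hexp2 hx α
  rw [hpair] at h1
  rcases h1 with h1 | h1
  · rw [h1, h1]
  · rw [Set.mem_singleton_iff] at h1
    have h2'' := orbit_mem_cls hm hexp2 hx (α.trans α)
    rw [hpair] at h2''
    have h2 : α (α x) = x ∨ α (α x) ∈ ({a * x * a⁻¹} : Set G) := h2''
    rcases h2 with h2 | h2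
    · exact h2
    · rw [Set.mem_singleton_iff] at h2
      exfalso
      have : α (α x) = α x := by rw [h2, ← h1]
      have hfix := α.injective this
      rw [h1] at hfix
      exact conj_ne_of_noncomm ha hfix

lemma aut_sq_eq_one (hna : ¬ ∀ a b : G, a * b = b * a) (α : MulAut G) (g : G) :
    α (α g) = g := by
  obtain ⟨a, b, hab⟩ := by push_neg at hna; exact hna
  have hanc : a ∉ center G := fun h => hab (Subgroup.mem_center_iff.mp h b).symm
  by_cases hg : g ∈ center G
  · -- a*g is noncentral
    have hag : a * g ∉ center G := by
      intro h
      apply hanc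
      have := (Subgroup.mem_center_iff.mp h)
      rw [Subgroup.mem_center_iff]
      intro k
      have h1 := this k
      have h2 := Subgroup.mem_center_iff.mp hg k
      -- k*(a*g) = (a*g)*k, k*g = g*k ⟹ k*a = a*k
      have : k * a * g = a * k * g := by
        calc k * a * g = k * (a * g) := by group
          _ = a * g * k := h1
          _ = a * (g * k) := by group
          _ = a * (k * g) := by rw [← h2]
          _ = a * k * g := by group
      exact mul_right_cancel this
    have h1 := aut_sq_fix_noncentral hm hexp2 hag α
    have h2 := aut_sq_fix_noncentral hm hexp2 hanc α
    have h3 : α (α (a * g)) = α (α a) * α (α g) := by simp [map_mul]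
    rw [h1, h2] at h3
    exact mul_left_cancel h3.symm
  · exact aut_sq_fix_noncentral hm hexp2 hg α

omit hexp2 in
lemma part3_exists_order3 (hna : ¬ ∀ a b : G, a * b = b * a) :
    ∃ q : G ⧸ center G, orderOf q = 3 := by
  by_contra hno
  push_neg at hno
  have hexp2 : ∀ q : G ⧸ center G, q^2 = 1 := by
    intro q
    rcases quot_sq_or_cube hm q with h | h
    · exact h
    · have hdvd := orderOf_dvd_of_pow_eq_one h
      have h3 := hno q
      have h1 := (Nat.prime_three.eq_one_or_self_of_dvd _ hdvd).resolve_right h3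
      rw [orderOf_eq_one_iff] at h1
      rw [h1, one_pow]
  -- some orbit has size 3
  obtain ⟨x, hx3⟩ := exists_card_orbit_eq_maol (G := G)
  rw [hm] at hx3
  have hdvd : (3:ℕ) ∣ Nat.card (MulAut G) := hx3 ▸ card_orbit_dvd_card_aut x
  obtain ⟨α, hα⟩ := exists_orderOf_eq_prime (H := MulAut G) 3 hdvd
  have hα2 : α * α = 1 := by
    ext g
    exact aut_sq_eq_one hm hexp2 hna α g
  have : orderOf α ∣ 2 := orderOf_dvd_of_pow_eq_one (by rw [pow_two]; exact hα2)
  rw [hα] at this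
  omega

end MaolAux3b

namespace MaolP2
open MaolAux MaolAux2 MaolAux3
set_option linter.unusedSectionVars false
variable {G : Type*} [Group G] [Finite G]
variable (hm : maol G = 3) (hexp3 : ∀ q : G ⧸ center G, q ^ 3 = 1)
include hm hexp3

lemma cube_mem_center (g : G) : g ^ 3 ∈ center G := by
  have := hexp3 (QuotientGroup.mk g)
  rwa [← QuotientGroup.mk_pow, QuotientGroup.eq_one_iff] at this

lemma conj_cube (g a : G) : g ^ 3 * a * (g ^ 3)⁻¹ = a := by
  have h := Subgroup.mem_center_iff.mp (cube_mem_center hm hexp3 g) a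
  rw [← h, mul_inv_cancel_right]

lemma not_two_dvd : ¬ (2:ℕ) ∣ Nat.card (G ⧸ center G) := by
  intro h
  obtain ⟨q, hq⟩ := exists_orderOf_eq_prime (H := G ⧸ center G) 2 h
  have h1 : q ^ 3 = 1 := hexp3 q
  have := orderOf_dvd_of_pow_eq_one h1
  rw [hq] at this
  omega

lemma card_cls_eq_three {x : G} (hx : x ∉ center G) : Nat.card (cls x) = 3 := by
  have h2 := two_le_card_cls hx
  have h3 := card_cls_le_three hm x
  rcases (by omega : Nat.card (cls x) = 2 ∨ Nat.card (cls x) = 3) with h | h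
  · exfalso
    apply not_two_dvd hm hexp3
    rw [← h, card_cls]
    exact Subgroup.index_dvd_of_le (center_le_centralizer_single x)
  · exact h

lemma orbit_eq_cls {x : G} (hx : x ∉ center G) : cls x = orbit (MulAut G) x := by
  apply Set.eq_of_subset_of_ncard_le (cls_subset_orbit x) _ (Set.toFinite _)
  have h1 := card_orbit_le_maol (G := G) x
  rw [hm, Nat.card_coe_set_eq] at h1
  have h2 := card_cls_eq_three hm hexp3 hx
  rw [Nat.card_coe_set_eq] at h2
  omega

lemma aut_mem_cls {x : G} (hx : x ∉ center G) (β : MulAut G) : ∃ g : G, β x = g * x * g⁻¹ := by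
  have : β x ∈ cls x := by
    rw [orbit_eq_cls hm hexp3 hx]
    exact ⟨β, rfl⟩
  obtain ⟨g, hg⟩ := this
  exact ⟨g, hg.symm⟩

lemma comm_conj {x : G} (hx : x ∉ center G) (g : G) :
    x * (g * x * g⁻¹) = (g * x * g⁻¹) * x := by
  by_contra hne
  set a := g * x * g⁻¹ with ha_def
  have haC : a ∈ cls x := conj_mem_cls x g
  have hbC : x * a * x⁻¹ ∈ cls x := by
    rw [ha_def, show x * (g * x * g⁻¹) * x⁻¹ = (x*g) * x * (x*g)⁻¹ by group]
    exact conj_mem_cls x (x*g)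
  set b := x * a * x⁻¹ with hb_def
  have hba : b ≠ a := by
    intro h
    apply hne
    have h2 : x * a * x⁻¹ = a := by rw [← hb_def]; exact h
    have := congrArg (· * x) h2
    simp only [inv_mul_cancel_right] at this
    exact this
  have hax : a ≠ x := fun h => hne (by rw [h])
  have hbx : b ≠ x := by
    intro h
    apply hax
    calc a = x⁻¹ * (x * a * x⁻¹) * x := by group
      _ = x⁻¹ * x * x := by rw [← hb_def, h]
      _ = x := by group
  -- cls x = {x, a, b}
  have hcls : ({x, a, b} : Set G) = cls x := by
    apply Set.eq_of_subset_of_ncard_le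
    · intro y hy
      rcases hy with rfl | rfl | hy
      · exact self_mem_cls _
      · exact haC
      · rw [Set.mem_singleton_iff] at hy; subst hy; exact hbC
    · have hc3 := card_cls_eq_three hm hexp3 hx
      rw [Nat.card_coe_set_eq] at hc3
      rw [hc3]
      have : ({x, a, b} : Set G).ncard = 3 := by
        rw [Set.ncard_insert_of_notMem (by simp [hax.symm, hbx.symm]) (Set.toFinite _),
          Set.ncard_pair hba.symm]
      omega
    · exact Set.toFinite _
  have hxbC : x * b * x⁻¹ ∈ cls x := by
    rw [hb_def, ha_def, show x * (x * (g * x * g⁻¹) * x⁻¹) * x⁻¹ = (x*x*g) * x * (x*x*g)⁻¹ by group]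
    exact conj_mem_cls x (x*x*g)
  rw [← hcls] at hxbC
  rcases hxbC with h | h | h
  · -- x * b * x⁻¹ = x  ⟹  b = x
    apply hbx
    calc b = x⁻¹ * (x * b * x⁻¹) * x := by group
      _ = x⁻¹ * x * x := by rw [h]
      _ = x := by group
  · -- x * b * x⁻¹ = a ⟹ x³ a x⁻³ = b ⟹ a = b
    apply hba.symm
    have key : x^3 * a * (x^3)⁻¹ = b := by
      calc x^3 * a * (x^3)⁻¹ = x * (x * (x * a * x⁻¹) * x⁻¹) * x⁻¹ := by
            rw [pow_succ, pow_two]; group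
        _ = x * (x * b * x⁻¹) * x⁻¹ := by rw [← hb_def]
        _ = x * a * x⁻¹ := by rw [h]
        _ = b := hb_def.symm
    rw [← key]
    exact (conj_cube hm hexp3 x a).symm ▸ (conj_cube hm hexp3 x a)
  · -- x * b * x⁻¹ = b ⟹ x a x⁻¹ = a ⟹ comm
    rw [Set.mem_singleton_iff] at h
    apply hne
    have e3 : x * a * x⁻¹ = a := by
      calc x * a * x⁻¹ = x⁻¹ * ((x * b * x⁻¹) * x) := by rw [hb_def]; group
        _ = x⁻¹ * (b * x) := by rw [h]
        _ = a := by rw [hb_def]; group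
    have := congrArg (· * x) e3
    simp only [inv_mul_cancel_right] at this
    exact this

end MaolP2

namespace MaolP2b
open MaolAux MaolAux2 MaolAux3 MaolP2
set_option linter.unusedSectionVars false
variable {G : Type*} [Group G] [Finite G]

section normal
variable (hm : maol G = 3) (hexp3 : ∀ q : G ⧸ center G, q ^ 3 = 1)
include hm hexp3

lemma centralizer_index {x : G} (hx : x ∉ center G) :
    (centralizer ({x} : Set G)).index = 3 := by
  rw [← card_cls]
  exact card_cls_eq_three hm hexp3 hx

lemma centralizer_normal {x : G} (hx : x ∉ center G) :
    (centralizer ({x} : Set G)).Normal := by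
  classical
  set A := centralizer ({x} : Set G) with hA
  have hA3 : A.index = 3 := centralizer_index hm hexp3 hx
  set φ := MulAction.toPermHom G (G ⧸ A) with hφ
  have hker_le : φ.ker ≤ A := by
    intro g hg
    rw [MonoidHom.mem_ker] at hg
    have h1 : g • ((1 : G) : G ⧸ A) = ((1 : G) : G ⧸ A) :=
      congrArg (fun e : Equiv.Perm (G ⧸ A) => e ((1 : G) : G ⧸ A)) hg
    have h2 : ((g * 1 : G) : G ⧸ A) = ((1 : G) : G ⧸ A) := h1
    rw [mul_one] at h2
    have := QuotientGroup.eq.mp h2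
    simpa using A.inv_mem this
  have hZ_le : center G ≤ φ.ker := by
    intro z hz
    rw [MonoidHom.mem_ker]
    ext q
    induction q using QuotientGroup.induction_on with
    | H h =>
      show ((z * h : G) : G ⧸ A) = (h : G ⧸ A)
      apply QuotientGroup.eq.mpr
      have : (z * h)⁻¹ * h = z⁻¹ := by
        rw [show z * h = h * z from (Subgroup.mem_center_iff.mp hz h).symm]
        group
      rw [this]
      exact A.inv_mem (center_le_centralizer_single x hz)
  have hcardQ : Nat.card (G ⧸ A) = 3 := hA3
  have hperm6 : Nat.card (Equiv.Perm (G ⧸ A)) = 6 := by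
    have ft : Fintype (G ⧸ A) := Fintype.ofFinite _
    rw [Nat.card_eq_fintype_card, Fintype.card_perm]
    rw [Nat.card_eq_fintype_card] at hcardQ
    rw [hcardQ]
    decide
  have hk6 : φ.ker.index ∣ 6 := by
    have e := (QuotientGroup.quotientKerEquivRange φ).toEquiv
    have : φ.ker.index = Nat.card φ.range := Nat.card_congr e
    rw [this, ← hperm6]
    exact Subgroup.card_subgroup_dvd_card φ.range
  have hodd : ¬ (2:ℕ) ∣ φ.ker.index := by
    intro h2
    exact not_two_dvd hm hexp3 (h2.trans (Subgroup.index_dvd_of_le hZ_le))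
  have hk3 : φ.ker.index ∣ 3 := by
    have hcop : Nat.Coprime (φ.ker.index) 2 :=
      Nat.coprime_comm.mp ((Nat.Prime.coprime_iff_not_dvd Nat.prime_two).mpr hodd)
    exact hcop.dvd_of_dvd_mul_right (by rw [show (3*2 : ℕ) = 6 from rfl]; exact hk6)
  have h3k : (3:ℕ) ∣ φ.ker.index := hA3 ▸ Subgroup.index_dvd_of_le hker_le
  have hkidx : φ.ker.index = 3 := Nat.dvd_antisymm hk3 h3k
  have hcard : Nat.card A ≤ Nat.card φ.ker := by
    have c1 := Subgroup.card_mul_index φ.ker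
    have c2 := Subgroup.card_mul_index A
    rw [hkidx] at c1
    rw [hA3] at c2
    omega
  have heq : φ.ker = A := Subgroup.eq_of_le_of_card_ge hker_le hcard
  exact heq ▸ MonoidHom.normal_ker φ

end normal

section coset
variable {A : Subgroup G} [A.Normal] {y : G}

lemma conj_mem_of_normal (a : G) (ha : a ∈ A) (g : G) : g * a * g⁻¹ ∈ A :=
  Subgroup.Normal.conj_mem ‹A.Normal› a ha g

variable (hy : y ∉ A) (hy3 : y^3 ∈ A)
include hy hy3

lemma ysq_not_mem : y * y ∉ A := by
  intro h
  apply hy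
  have h1 : y^3 * (y*y)⁻¹ ∈ A := A.mul_mem hy3 (A.inv_mem h)
  have : y^3 * (y*y)⁻¹ = y := by group
  rwa [this] at h1

/-- coset membership at level i -/
def memC (A : Subgroup G) (y g : G) (i : ℕ) : Prop := g * (y^i)⁻¹ ∈ A

omit hy hy3 in
lemma memC_mul {g h : G} {i j : ℕ} (hg : memC A y g i) (hh : memC A y h j) :
    memC A y (g * h) (i + j) := by
  unfold memC at *
  have : (g * h) * (y^(i+j))⁻¹ = (g * (y^i)⁻¹) * ((y^i) * (h * (y^j)⁻¹) * (y^i)⁻¹) := by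
    rw [pow_add]; group
  rw [this]
  exact A.mul_mem hg (conj_mem_of_normal _ hh _)

omit hy in
lemma memC_three {g : G} {i : ℕ} (h : memC A y g (i+3)) : memC A y g i := by
  unfold memC at *
  have : g * (y^i)⁻¹ = (g * (y^(i+3))⁻¹) * (y^i * y^3 * (y^i)⁻¹) := by
    rw [pow_add]; group
  rw [this]
  exact A.mul_mem h (conj_mem_of_normal _ hy3 _)

omit hy3 in
lemma memC_zero_one {g : G} (h0 : memC A y g 0) (h1 : memC A y g 1) : False := by
  unfold memC at *
  simp only [pow_zero, pow_one, inv_one, mul_one] at h0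
  exact hy (by simpa using A.mul_mem (A.inv_mem h1) h0)

lemma memC_zero_two {g : G} (h0 : memC A y g 0) (h2 : memC A y g 2) : False := by
  unfold memC at *
  simp only [pow_zero, inv_one, mul_one] at h0
  have := A.mul_mem (A.inv_mem h2) h0
  have h3 : (g * (y^2)⁻¹)⁻¹ * g = y^2 := by group
  rw [h3, pow_two] at this
  exact ysq_not_mem hy hy3 this

lemma memC_one_two {g : G} (h1 : memC A y g 1) (h2 : memC A y g 2) : False := by
  unfold memC at *
  have := A.mul_mem (A.inv_mem h2) h1
  have h3 : (g * (y^2)⁻¹)⁻¹ * (g * (y^1)⁻¹) = y := by group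
  rw [h3] at this
  exact hy this

variable (hidx : A.index = 3)
include hidx

lemma coset_trichotomy (g : G) : memC A y g 0 ∨ memC A y g 1 ∨ memC A y g 2 := by
  classical
  have ft : Fintype (G ⧸ A) := Fintype.ofFinite _
  have hcardQ : Fintype.card (G ⧸ A) = 3 := by
    rw [← Nat.card_eq_fintype_card]; exact hidx
  set q0 : G ⧸ A := QuotientGroup.mk 1 with hq0
  set q1 : G ⧸ A := QuotientGroup.mk y with hq1
  set q2 : G ⧸ A := QuotientGroup.mk (y*y) with hq2
  have hne01 : q0 ≠ q1 := by
    intro h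
    exact hy (by simpa using QuotientGroup.eq.mp h)
  have hne02 : q0 ≠ q2 := by
    intro h
    exact ysq_not_mem hy hy3 (by simpa using QuotientGroup.eq.mp h)
  have hne12 : q1 ≠ q2 := by
    intro h
    have := QuotientGroup.eq.mp h
    rw [show y⁻¹ * (y*y) = y by group] at this
    exact hy this
  have huniv : ({q0, q1, q2} : Finset (G ⧸ A)) = Finset.univ := by
    apply Finset.eq_univ_of_card
    rw [Finset.card_insert_of_notMem (by simp [hne01, hne02]),
      Finset.card_insert_of_notMem (by simp [hne12]), Finset.card_singleton, hcardQ]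
  have hg : (QuotientGroup.mk g : G ⧸ A) ∈ ({q0, q1, q2} : Finset (G ⧸ A)) := by
    rw [huniv]; exact Finset.mem_univ _
  simp only [Finset.mem_insert, Finset.mem_singleton] at hg
  rcases hg with h | h | h
  · left
    unfold memC
    have h1 := QuotientGroup.eq.mp h.symm
    simpa using h1
  · right; left
    unfold memC
    have h1 := QuotientGroup.eq.mp h
    have h2 : y⁻¹ * g ∈ A := by
      have := A.inv_mem h1
      simpa [mul_assoc] using this
    have h5 : y * (y⁻¹ * g) * y⁻¹ ∈ A := conj_mem_of_normal _ h2 _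
    rw [show y * (y⁻¹ * g) * y⁻¹ = g * y⁻¹ by group] at h5
    simpa using h5
  · right; right
    unfold memC
    have := QuotientGroup.eq.mp h
    have h5 : (y*y) * (g⁻¹ * (y*y))⁻¹ * (y*y)⁻¹ ∈ A :=
      conj_mem_of_normal _ (A.inv_mem this) _
    rw [show (y*y) * (g⁻¹ * (y*y))⁻¹ * (y*y)⁻¹ = g * (y*y)⁻¹ by group] at h5
    rw [pow_two]
    exact h5

end coset
end MaolP2b

namespace MaolP2c
open MaolAux MaolAux2 MaolAux3 MaolP2 MaolP2b
set_option linter.unusedSectionVars false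
variable {G : Type*} [Group G] [Finite G]

lemma exists_aut {A : Subgroup G} [A.Normal] {y w : G}
    (hidx : A.index = 3) (hy : y ∉ A) (hy3c : ∀ g : G, y^3 * g = g * y^3)
    (hwA : w ∈ A) (hwc : ∀ a ∈ A, a * w = w * a)
    (hN : (y⁻¹*(y⁻¹*w*y)*y) * (y⁻¹*w*y) * w = 1) :
    ∃ α : MulAut G, α y = y * w ∧ ∀ a ∈ A, α a = a := by
  classical
  have hy3A : y^3 ∈ A := by
    have hq : ((y : G) : G ⧸ A)^3 = 1 := by
      have hcard : Nat.card (G ⧸ A) = 3 := hidx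
      rw [← hcard]
      exact pow_card_eq_one'
    rwa [← QuotientGroup.mk_pow, QuotientGroup.eq_one_iff] at hq
  set w1 : G := y⁻¹ * w * y with hw1
  set w2 : G := y⁻¹ * w1 * y with hw2
  have hN' : w2 * w1 * w = 1 := hN
  have hw1A : w1 ∈ A := by
    rw [hw1, show y⁻¹ * w * y = y⁻¹ * w * (y⁻¹)⁻¹ by group]
    exact conj_mem_of_normal _ hwA _
  have hw1c : ∀ a ∈ A, a * w1 = w1 * a := by
    intro a ha
    have hya : y * a * y⁻¹ ∈ A := conj_mem_of_normal _ ha _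
    have hcc := hwc _ hya
    calc a * w1 = y⁻¹ * ((y * a * y⁻¹) * w) * y := by rw [hw1]; group
      _ = y⁻¹ * (w * (y * a * y⁻¹)) * y := by rw [hcc]
      _ = w1 * a := by rw [hw1]; group
  have hw2A : w2 ∈ A := by
    rw [hw2, show y⁻¹ * w1 * y = y⁻¹ * w1 * (y⁻¹)⁻¹ by group]
    exact conj_mem_of_normal _ hw1A _
  have hw1wc : ∀ a ∈ A, a * (w1 * w) = (w1 * w) * a := by
    intro a ha
    calc a * (w1 * w) = (a * w1) * w := by group
      _ = w1 * (a * w) := by rw [hw1c a ha]; group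
      _ = (w1 * w) * a := by rw [hwc a ha]; group
  -- conjugation constants
  have c21 : (y^2)⁻¹ * w * y^2 = w2 := by
    rw [hw2, hw1, pow_two]; group
  have c20 : y⁻¹ * (w1 * w) * y = w2 * w1 := by
    rw [hw2, hw1]; group
  have cy3 : y⁻¹ * w2 * y = w := by
    have h3 := hy3c w
    rw [hw2, hw1]
    have e : y⁻¹ * (y⁻¹ * (y⁻¹ * w * y) * y) * y = (y^3)⁻¹ * w * y^3 := by
      rw [show (y:G)^3 = y*y*y by rw [pow_succ, pow_two]]
      group
    rw [e, show (y^3)⁻¹ * w * y^3 = (y^3)⁻¹ * (w * y^3) by group, ← h3]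
    group
  have c22 : (y^2)⁻¹ * (w1 * w) * y^2 = w * w2 := by
    have e1 : (y^2)⁻¹ * (w1 * w) * y^2 = (y⁻¹ * (y⁻¹ * w1 * y) * y) * ((y^2)⁻¹ * w * y^2) := by
      rw [pow_two]; group
    rw [e1, c21, ← hw2, cy3]
  -- the translation map
  set t : G → G := fun g =>
    if memC A y g 0 then 1 else if memC A y g 1 then w else w1 * w with ht
  have tval0 : ∀ g, memC A y g 0 → t g = 1 := by
    intro g hg; simp only [ht]; rw [if_pos hg]
  have tval1 : ∀ g, memC A y g 1 → t g = w := by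
    intro g hg; simp only [ht]
    rw [if_neg (fun h0 => memC_zero_one hy h0 hg), if_pos hg]
  have tval2 : ∀ g, memC A y g 2 → t g = w1 * w := by
    intro g hg; simp only [ht]
    rw [if_neg (fun h0 => memC_zero_two hy hy3A h0 hg),
      if_neg (fun h1 => memC_one_two hy hy3A h1 hg)]
  have tA : ∀ g, t g ∈ A := by
    intro g
    simp only [ht]
    split
    · exact A.one_mem
    · split
      · exact hwA
      · exact A.mul_mem hw1A hwA
  -- conjugation reduction
  have conjred : ∀ (h v : G) (j : ℕ), memC A y h j → (∀ a ∈ A, a * v = v * a) →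
      h⁻¹ * v * h = (y^j)⁻¹ * v * y^j := by
    intro h v j hh hv
    have ha : h * (y^j)⁻¹ ∈ A := hh
    have hva : (h * (y^j)⁻¹)⁻¹ * v * (h * (y^j)⁻¹) = v := by
      have hc := hv _ ha
      calc (h * (y^j)⁻¹)⁻¹ * v * (h * (y^j)⁻¹)
          = (h * (y^j)⁻¹)⁻¹ * (v * (h * (y^j)⁻¹)) := by group
        _ = (h * (y^j)⁻¹)⁻¹ * ((h * (y^j)⁻¹) * v) := by rw [hc]
        _ = v := by group
    calc h⁻¹ * v * h
        = (y^j)⁻¹ * ((h * (y^j)⁻¹)⁻¹ * v * (h * (y^j)⁻¹)) * y^j := by group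
      _ = (y^j)⁻¹ * v * y^j := by rw [hva]
  -- the cocycle identity
  have tmul : ∀ g h, t (g * h) = h⁻¹ * (t g) * h * (t h) := by
    intro g h
    rcases coset_trichotomy hy hy3A hidx g with hg | hg | hg <;>
      rcases coset_trichotomy hy hy3A hidx h with hh | hh | hh
    · rw [tval0 _ hg, tval0 _ hh, tval0 _ (memC_mul (i := 0) (j := 0) hg hh)]; group
    · rw [tval0 _ hg, tval1 _ hh, tval1 _ (memC_mul (i := 0) (j := 1) hg hh)]; group
    · rw [tval0 _ hg, tval2 _ hh, tval2 _ (memC_mul (i := 0) (j := 2) hg hh)]; group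
    · -- (1,0)
      rw [tval1 _ hg, tval0 _ hh, tval1 _ (memC_mul (i := 1) (j := 0) hg hh),
        conjred h w 0 hh hwc]
      group
    · -- (1,1)
      rw [tval1 _ hg, tval1 _ hh, tval2 _ (memC_mul (i := 1) (j := 1) hg hh),
        conjred h w 1 hh hwc, pow_one, ← hw1]
    · -- (1,2)
      rw [tval1 _ hg, tval2 _ hh,
        tval0 _ (memC_three hy3A (memC_mul (i := 1) (j := 2) hg hh)),
        conjred h w 2 hh hwc, c21, ← mul_assoc, hN']
    · -- (2,0)
      rw [tval2 _ hg, tval0 _ hh, tval2 _ (memC_mul (i := 2) (j := 0) hg hh),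
        conjred h (w1*w) 0 hh hw1wc]
      group
    · -- (2,1)
      rw [tval2 _ hg, tval1 _ hh,
        tval0 _ (memC_three hy3A (memC_mul (i := 2) (j := 1) hg hh)),
        conjred h (w1*w) 1 hh hw1wc, pow_one, c20, hN']
    · -- (2,2)
      rw [tval2 _ hg, tval2 _ hh,
        tval1 _ (memC_three hy3A (memC_mul (i := 2) (j := 2) hg hh)),
        conjred h (w1*w) 2 hh hw1wc, c22,
        mul_assoc w w2 (w1*w), ← mul_assoc w2 w1 w, hN', mul_one]
  -- build the homomorphism
  set φfun : G → G := fun g => g * t g with hφfun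
  have hmul : ∀ g h, φfun (g * h) = φfun g * φfun h := by
    intro g h
    simp only [hφfun]
    rw [tmul g h]
    group
  have hone : φfun 1 = 1 := by
    simp only [hφfun]
    rw [tval0 1 (by simpa [memC] using A.one_mem)]
    simp
  set φ : G →* G := { toFun := φfun, map_one' := hone, map_mul' := hmul } with hφ
  have hinj : Function.Injective φ := by
    rw [injective_iff_map_eq_one]
    intro g hg
    have hg' : g * t g = 1 := hg
    have hgA : g ∈ A := by
      have : g = (t g)⁻¹ := eq_inv_iff_mul_eq_one.mpr hg'
      rw [this]
      exact A.inv_mem (tA g)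
    have : t g = 1 := tval0 g (by simpa [memC] using hgA)
    rw [this, mul_one] at hg'
    exact hg'
  have hbij : Function.Bijective φ := Finite.injective_iff_bijective.mp hinj
  refine ⟨MulEquiv.ofBijective φ hbij, ?_, ?_⟩
  · show φfun y = y * w
    simp only [hφfun]
    rw [tval1 y (by simpa [memC] using A.one_mem)]
  · intro a ha
    show φfun a = a
    simp only [hφfun]
    rw [tval0 a (by simpa [memC] using ha), mul_one]

end MaolP2c

namespace MaolP2d
open MaolAux MaolAux2 MaolAux3 MaolP2 MaolP2b MaolP2c
set_option linter.unusedSectionVars false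
variable {G : Type*} [Group G] [Finite G]

lemma noncentral_left {x y : G} (h : ¬ x * y = y * x) : x ∉ center G :=
  fun hc => h ((Subgroup.mem_center_iff.mp hc y).symm)

lemma noncentral_right {x y : G} (h : ¬ x * y = y * x) : y ∉ center G :=
  fun hc => h (Subgroup.mem_center_iff.mp hc x)

variable (hm : maol G = 3) (hexp3 : ∀ q : G ⧸ center G, q ^ 3 = 1)
include hm hexp3

lemma conjx_comm_A {x : G} (hx : x ∉ center G) (g : G) {a : G}
    (ha : a ∈ centralizer ({x} : Set G)) :
    a * (g * x * g⁻¹) = (g * x * g⁻¹) * a := by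
  haveI := centralizer_normal hm hexp3 hx
  have hb : g⁻¹ * a * (g⁻¹)⁻¹ ∈ centralizer ({x} : Set G) := conj_mem_of_normal _ ha _
  have hc := mem_centralizer_single.mp hb
  rw [inv_inv] at hc
  calc a * (g * x * g⁻¹) = g * ((g⁻¹ * a * g) * x) * g⁻¹ := by group
    _ = g * (x * (g⁻¹ * a * g)) * g⁻¹ := by rw [← hc]
    _ = (g * x * g⁻¹) * a := by group

/-- Stage I: all commutators are central -/
lemma commutator_central (x y : G) : x⁻¹ * (y⁻¹ * x * y) ∈ center G := by
  by_cases hcomm : x * y = y * x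
  · have he : x⁻¹ * (y⁻¹ * x * y) = 1 := by
      rw [show y⁻¹ * x * y = y⁻¹ * (x * y) by group, hcomm]
      group
    rw [he]; exact Subgroup.one_mem _
  by_contra hz
  set A := centralizer ({x} : Set G) with hA
  have hxnc : x ∉ center G := noncentral_left hcomm
  have hync : y ∉ center G := noncentral_right hcomm
  haveI := centralizer_normal hm hexp3 hxnc
  have hidx : A.index = 3 := centralizer_index hm hexp3 hxnc
  have hynotA : y ∉ A := fun hyA => hcomm (mem_centralizer_single.mp hyA)
  set u : G := y⁻¹ * x * y with hu
  set v : G := y⁻¹ * u * y with hv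
  set P : G := v * u * x with hP
  set z : G := x⁻¹ * u with hzdef
  have hxu : x * u = u * x := by
    have h := comm_conj hm hexp3 hxnc y⁻¹
    have e : y⁻¹ * x * (y⁻¹)⁻¹ = u := by rw [hu]; group
    rw [e] at h
    exact h
  have hxv : x * v = v * x := by
    have h := comm_conj hm hexp3 hxnc (y⁻¹*y⁻¹)
    rw [mul_inv_rev, inv_inv] at h
    have e : (y⁻¹*y⁻¹) * x * (y*y) = v := by rw [hv, hu]; group
    rw [e] at h
    exact h
  have huv : u * v = v * u := by
    calc u * v = y⁻¹ * ((x * u) * y) := by rw [hv, hu]; group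
      _ = y⁻¹ * ((u * x) * y) := by rw [hxu]
      _ = v * u := by rw [hv, hu]; group
  have hxA : x ∈ A := mem_centralizer_single.mpr rfl
  have huA : u ∈ A := mem_centralizer_single.mpr hxu
  have hvA : v ∈ A := mem_centralizer_single.mpr hxv
  have hzA : z ∈ A := A.mul_mem (A.inv_mem hxA) huA
  have hau : ∀ a ∈ A, a * u = u * a := by
    intro a ha
    have h := conjx_comm_A hm hexp3 hxnc y⁻¹ ha
    have e : y⁻¹ * x * (y⁻¹)⁻¹ = u := by rw [hu]; group
    rw [e] at h
    exact h
  have hav : ∀ a ∈ A, a * v = v * a := by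
    intro a ha
    have h := conjx_comm_A hm hexp3 hxnc (y⁻¹*y⁻¹) ha
    rw [mul_inv_rev, inv_inv] at h
    have e : (y⁻¹*y⁻¹) * x * (y*y) = v := by rw [hv, hu]; group
    rw [e] at h
    exact h
  have hz_comm : ∀ a ∈ A, a * z = z * a := by
    intro a ha
    have h1 := hau a ha
    have h2 : a * x⁻¹ = x⁻¹ * a := by
      have h3 := mem_centralizer_single.mp ha
      calc a * x⁻¹ = x⁻¹ * ((x * a) * x⁻¹) := by group
        _ = x⁻¹ * ((a * x) * x⁻¹) := by rw [← h3]
        _ = x⁻¹ * a := by group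
    calc a * z = (a * x⁻¹) * u := by rw [hzdef]; group
      _ = x⁻¹ * (a * u) := by rw [h2]; group
      _ = x⁻¹ * (u * a) := by rw [h1]
      _ = z * a := by rw [hzdef]; group
  have hzle : A ≤ centralizer ({z} : Set G) := fun a ha =>
    mem_centralizer_single.mpr (hz_comm a ha).symm
  have hznotop : centralizer ({z} : Set G) ≠ ⊤ := by
    intro htop
    exact hz (centralizer_eq_top_iff_subset.mp htop rfl)
  have hzidx : (centralizer ({z} : Set G)).index = 3 := by
    have hdvd : (centralizer ({z} : Set G)).index ∣ A.index := Subgroup.index_dvd_of_le hzle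
    rw [hidx] at hdvd
    rcases (Nat.prime_three.eq_one_or_self_of_dvd _ hdvd) with h1 | h3
    · exact absurd (Subgroup.index_eq_one.mp h1) hznotop
    · exact h3
  have hzeq : A = centralizer ({z} : Set G) := by
    apply Subgroup.eq_of_le_of_card_ge hzle
    have c1 := Subgroup.card_mul_index A
    have c2 := Subgroup.card_mul_index (centralizer ({z} : Set G))
    rw [hidx] at c1
    rw [hzidx] at c2
    omega
  have hyz : ¬ (z * y = y * z) := fun h =>
    hynotA (hzeq ▸ mem_centralizer_single.mpr h)
  -- P is central
  have hPcomm : ∀ a ∈ A, a * P = P * a := by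
    intro a ha
    have h3 := mem_centralizer_single.mp ha
    calc a * P = (a * v) * u * x := by rw [hP]; group
      _ = v * ((a * u) * x) := by rw [hav a ha]; group
      _ = v * (u * (a * x)) := by rw [hau a ha]; group
      _ = v * (u * (x * a)) := by rw [← h3]
      _ = P * a := by rw [hP]; group
  have hycube : ∀ g : G, g * (y*y*y) = (y*y*y) * g := by
    intro g
    have h := Subgroup.mem_center_iff.mp (cube_mem_center hm hexp3 y) g
    rw [show (y:G)*y*y = y^3 by rw [pow_succ, pow_two]]
    exact h
  have hPy : y⁻¹ * P * y = P := by
    have e2 : y⁻¹ * v * y = x := by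
      have h := hycube x
      calc y⁻¹ * v * y = (y*y*y)⁻¹ * (x * (y*y*y)) := by rw [hv, hu]; group
        _ = (y*y*y)⁻¹ * ((y*y*y) * x) := by rw [← h]
        _ = x := by group
    have e1 : y⁻¹ * P * y = (y⁻¹ * v * y) * (v * u) := by
      rw [hP, hv, hu]; group
    rw [e1, e2, hP]
    calc x * (v * u) = (x * v) * u := by group
      _ = v * (x * u) := by rw [hxv]; group
      _ = v * (u * x) := by rw [hxu]
      _ = v * u * x := by group
  have hPyc : P * y = y * P := by
    calc P * y = y * (y⁻¹ * P * y) := by group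
      _ = y * P := by rw [hPy]
  have hy3A : y^3 ∈ A := center_le_centralizer_single x (cube_mem_center hm hexp3 y)
  have hPcen : P ∈ center G := by
    rw [Subgroup.mem_center_iff]
    intro g
    rcases coset_trichotomy hynotA hy3A hidx g with h0 | h1 | h2
    · have hgA : g ∈ A := by simpa [memC] using h0
      exact hPcomm g hgA
    · have hgA : g * y⁻¹ ∈ A := by simpa [memC] using h1
      calc g * P = (g * y⁻¹) * (y * P) := by group
        _ = (g * y⁻¹) * (P * y) := by rw [← hPyc]
        _ = ((g * y⁻¹) * P) * y := by group
        _ = (P * (g * y⁻¹)) * y := by rw [hPcomm _ hgA]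
        _ = P * g := by group
    · have hgA : g * (y*y)⁻¹ ∈ A := by
        have : g * (y^2)⁻¹ ∈ A := h2
        rwa [pow_two] at this
      have hPy2 : P * (y*y) = (y*y) * P := by
        calc P * (y*y) = (P*y)*y := by group
          _ = (y*P)*y := by rw [hPyc]
          _ = y*(P*y) := by group
          _ = y*(y*P) := by rw [hPyc]
          _ = (y*y)*P := by group
      calc g * P = (g * (y*y)⁻¹) * ((y*y) * P) := by group
        _ = (g * (y*y)⁻¹) * (P * (y*y)) := by rw [← hPy2]
        _ = ((g * (y*y)⁻¹) * P) * (y*y) := by group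
        _ = (P * (g * (y*y)⁻¹)) * (y*y) := by rw [hPcomm _ hgA]
        _ = P * g := by group
  -- δ
  set δ : G := z⁻¹ * (y⁻¹ * z * y) with hδdef
  have hCxu : Commute x u := hxu
  have hCxv : Commute x v := hxv
  have hCuv : Commute u v := huv
  have e1 : y⁻¹ * z * y = u⁻¹ * v := by rw [hzdef, hv, hu]; group
  have hδP : δ = P * (u*u*u)⁻¹ := by
    rw [hδdef, e1, hzdef, hP]
    have s1 : u⁻¹ * v = v * u⁻¹ := (hCuv.inv_left).eq
    have s2 : x * u⁻¹ = u⁻¹ * x := (hCxu.inv_right).eq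
    calc (x⁻¹*u)⁻¹ * (u⁻¹*v) = u⁻¹ * (x * (u⁻¹ * v)) := by group
      _ = u⁻¹ * (x * (v * u⁻¹)) := by rw [s1]
      _ = u⁻¹ * ((x * v) * u⁻¹) := by group
      _ = u⁻¹ * ((v * x) * u⁻¹) := by rw [hxv]
      _ = (u⁻¹ * v) * (x * u⁻¹) := by group
      _ = (v * u⁻¹) * (x * u⁻¹) := by rw [s1]
      _ = (v * u⁻¹) * (u⁻¹ * x) := by rw [s2]
      _ = v * (u * (u*u*u)⁻¹) * x := by group
      _ = v * u * ((u*u*u)⁻¹ * x) := by group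
      _ = v * u * (x * (u*u*u)⁻¹) := by
          rw [(((hCxu.mul_right hCxu).mul_right hCxu).inv_right).eq]
      _ = (v*u*x) * (u*u*u)⁻¹ := by group
  have hucube : u*u*u ∈ center G := by
    rw [show (u:G)*u*u = u^3 by rw [pow_succ, pow_two]]
    exact cube_mem_center hm hexp3 u
  have hδcen : δ ∈ center G := by
    rw [hδP]
    exact Subgroup.mul_mem _ hPcen (Subgroup.inv_mem _ hucube)
  have hδg : ∀ k : G, k * δ = δ * k := Subgroup.mem_center_iff.mp hδcen
  have hδne : δ ≠ 1 := by
    intro h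
    apply hyz
    have h2 : y⁻¹ * z * y = z := by
      calc y⁻¹*z*y = z*(z⁻¹*(y⁻¹*z*y)) := by group
        _ = z * δ := by rw [hδdef]
        _ = z := by rw [h, mul_one]
    calc z * y = y * (y⁻¹ * z * y) := by group
      _ = y * z := by rw [h2]
  have hzy : y⁻¹ * z * y = z * δ := by rw [hδdef]; group
  have hδ3 : δ * δ * δ = 1 := by
    have hz3c : ∀ g : G, g * (z*z*z) = (z*z*z) * g := by
      intro g
      have h := Subgroup.mem_center_iff.mp (cube_mem_center hm hexp3 z) g
      rw [show (z:G)*z*z = z^3 by rw [pow_succ, pow_two]]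
      exact h
    have e4 : y⁻¹*(z*z*z)*y = (z*δ)*(z*δ)*(z*δ) := by
      calc y⁻¹*(z*z*z)*y = (y⁻¹*z*y)*(y⁻¹*z*y)*(y⁻¹*z*y) := by group
        _ = (z*δ)*(z*δ)*(z*δ) := by rw [hzy]
    have e5 : y⁻¹*(z*z*z)*y = z*z*z := by
      calc y⁻¹*(z*z*z)*y = y⁻¹*((z*z*z)*y) := by group
        _ = y⁻¹*(y*(z*z*z)) := by rw [← hz3c y]
        _ = z*z*z := by group
    have e6 : (z*δ)*(z*δ)*(z*δ) = (z*z*z)*(δ*δ*δ) := by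
      calc (z*δ)*(z*δ)*(z*δ) = z*(δ*z)*(δ*z)*δ := by group
        _ = z*(z*δ)*(z*δ)*δ := by rw [← hδg z]
        _ = z*z*(δ*z)*(δ*δ) := by group
        _ = z*z*(z*δ)*(δ*δ) := by rw [← hδg z]
        _ = (z*z*z)*(δ*δ*δ) := by group
    have : z*z*z = (z*z*z)*(δ*δ*δ) := by
      rw [← e6, ← e4, e5]
    exact (left_eq_mul.mp this)
  -- apply the automorphism sending y to y*δ
  have hδA : δ ∈ A := center_le_centralizer_single x hδcen
  have hδcomm : ∀ a ∈ A, a * δ = δ * a := fun a _ => hδg a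
  have hy3c : ∀ g : G, y^3 * g = g * y^3 := fun g =>
    (Subgroup.mem_center_iff.mp (cube_mem_center hm hexp3 y) g).symm
  have hδy : y⁻¹ * δ * y = δ := by
    calc y⁻¹*δ*y = y⁻¹*(δ*y) := by group
      _ = y⁻¹*(y*δ) := by rw [← hδg y]
      _ = δ := by group
  have hNδ : (y⁻¹*(y⁻¹*δ*y)*y) * (y⁻¹*δ*y) * δ = 1 := by
    simp only [hδy]
    exact hδ3
  obtain ⟨α, hαy, -⟩ := exists_aut hidx hynotA hy3c hδA hδcomm hNδ
  have hyδcls : y * δ ∈ cls y := by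
    rw [orbit_eq_cls hm hexp3 hync, ← hαy]
    exact ⟨α, rfl⟩
  obtain ⟨g1, hg1pre⟩ := hyδcls
  have hg1 : g1 * y * g1⁻¹ = y * δ := hg1pre
  have hyδ2cls : y * (δ*δ) ∈ cls y := by
    refine ⟨g1*g1, ?_⟩
    show (g1*g1)*y*(g1*g1)⁻¹ = y*(δ*δ)
    calc (g1*g1)*y*(g1*g1)⁻¹ = g1*(g1*y*g1⁻¹)*g1⁻¹ := by group
      _ = g1*(y*δ)*g1⁻¹ := by rw [hg1]
      _ = g1*y*(δ*g1⁻¹) := by group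
      _ = g1*y*(g1⁻¹*δ) := by rw [← hδg g1⁻¹]
      _ = (g1*y*g1⁻¹)*δ := by group
      _ = (y*δ)*δ := by rw [hg1]
      _ = y*(δ*δ) := by group
  have hδ2ne : δ * δ ≠ 1 := by
    intro h
    apply hδne
    have h2 := hδ3
    rw [h, one_mul] at h2
    exact h2
  have hδδ2ne : δ ≠ δ * δ := by
    intro h
    apply hδne
    have := congrArg (fun t => δ⁻¹ * t) h
    simpa using this.symm
  have hne1 : y ≠ y * δ := by
    intro h
    apply hδne
    have := congrArg (fun t => y⁻¹ * t) h
    simpa using this.symm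
  have hne2 : y ≠ y * (δ*δ) := by
    intro h
    apply hδ2ne
    have := congrArg (fun t => y⁻¹ * t) h
    simpa using this.symm
  have hne3 : y * δ ≠ y * (δ*δ) := by
    intro h
    apply hδδ2ne
    have := congrArg (fun t => y⁻¹ * t) h
    simpa using this
  have hclsy : ({y, y*δ, y*(δ*δ)} : Set G) = cls y := by
    apply Set.eq_of_subset_of_ncard_le
    · intro w hw
      rcases hw with rfl | rfl | hw
      · exact self_mem_cls _
      · exact ⟨g1, hg1⟩
      · rw [Set.mem_singleton_iff] at hw
        subst hw
        exact hyδ2cls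
    · have hc3 := card_cls_eq_three hm hexp3 hync
      rw [Nat.card_coe_set_eq] at hc3
      rw [hc3]
      have : ({y, y*δ, y*(δ*δ)} : Set G).ncard = 3 := by
        rw [Set.ncard_insert_of_notMem (by simp [hne1, hne2]) (Set.toFinite _),
          Set.ncard_pair hne3]
      omega
    · exact Set.toFinite _
  -- x * y * x⁻¹ lies in cls y
  have hkey : ∀ c : G, c ∈ center G → x * y * x⁻¹ = y * c → False := by
    intro c hcc hxy
    apply hz
    have hcg := Subgroup.mem_center_iff.mp hcc
    have hzc : z = c := by
      rw [hzdef, hu]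
      calc x⁻¹*(y⁻¹*x*y) = x⁻¹*(y⁻¹*((x*y*x⁻¹)*x)) := by group
        _ = x⁻¹*(y⁻¹*((y*c)*x)) := by rw [hxy]
        _ = x⁻¹*(c*x) := by group
        _ = x⁻¹*(x*c) := by rw [← hcg x]
        _ = c := by group
    rw [hzc]
    exact hcc
  have hmem := conj_mem_cls y x
  rw [← hclsy] at hmem
  rcases hmem with h | h | h
  · exact hkey 1 (Subgroup.one_mem _) (by rw [mul_one]; exact h)
  · exact hkey δ hδcen h
  · rw [Set.mem_singleton_iff] at h
    exact hkey (δ*δ) (Subgroup.mul_mem _ hδcen hδcen) h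

end MaolP2d

namespace MaolP2e
open MaolAux MaolAux2 MaolAux3 MaolP2 MaolP2b MaolP2c MaolP2d
set_option linter.unusedSectionVars false
variable {G : Type*} [Group G] [Finite G]
variable (hm : maol G = 3) (hexp3 : ∀ q : G ⧸ center G, q ^ 3 = 1)
include hm hexp3

lemma commutator_cube (x y : G) :
    (x⁻¹*(y⁻¹*x*y))*(x⁻¹*(y⁻¹*x*y))*(x⁻¹*(y⁻¹*x*y)) = 1 := by
  set z : G := x⁻¹*(y⁻¹*x*y) with hzdef
  have hzc := commutator_central hm hexp3 x y
  rw [← hzdef] at hzc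
  have hzg : ∀ k : G, k * z = z * k := Subgroup.mem_center_iff.mp hzc
  have repl : y⁻¹*x*y = x*z := by rw [hzdef]; group
  have hx3 : ∀ g : G, g * (x*x*x) = (x*x*x) * g := by
    intro g
    have h := Subgroup.mem_center_iff.mp (cube_mem_center hm hexp3 x) g
    rw [show (x:G)*x*x = x^3 by rw [pow_succ, pow_two]]
    exact h
  have e4 : y⁻¹*(x*x*x)*y = (x*z)*(x*z)*(x*z) := by
    calc y⁻¹*(x*x*x)*y = (y⁻¹*x*y)*(y⁻¹*x*y)*(y⁻¹*x*y) := by group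
      _ = (x*z)*(x*z)*(x*z) := by rw [repl]
  have e5 : y⁻¹*(x*x*x)*y = x*x*x := by
    calc y⁻¹*(x*x*x)*y = y⁻¹*((x*x*x)*y) := by group
      _ = y⁻¹*(y*(x*x*x)) := by rw [← hx3 y]
      _ = x*x*x := by group
  have e6 : (x*z)*(x*z)*(x*z) = (x*x*x)*(z*z*z) := by
    calc (x*z)*(x*z)*(x*z) = x*(z*x)*(z*x)*z := by group
      _ = x*(x*z)*(x*z)*z := by rw [← hzg x]
      _ = x*x*(z*x)*(z*z) := by group
      _ = x*x*(x*z)*(z*z) := by rw [← hzg x]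
      _ = (x*x*x)*(z*z*z) := by group
  have e7 : x*x*x = (x*x*x)*(z*z*z) := by
    rw [← e6, ← e4, e5]
  exact (left_eq_mul.mp e7)

lemma cube_mul (g h : G) : (g*h)^3 = g^3 * h^3 := by
  set z : G := h⁻¹*(g⁻¹*h*g) with hzdef
  have hzc := commutator_central hm hexp3 h g
  rw [← hzdef] at hzc
  have hzg : ∀ k : G, k * z = z * k := Subgroup.mem_center_iff.mp hzc
  have hz3 : z*z*z = 1 := by
    have := commutator_cube hm hexp3 h g
    rw [← hzdef] at this
    exact this
  have repl : g⁻¹*h*g = h*z := by rw [hzdef]; group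
  have swap1 : ∀ a b : G, a*(z*b) = z*(a*b) := by
    intro a b
    calc a*(z*b) = (a*z)*b := by group
      _ = (z*a)*b := by rw [hzg a]
      _ = z*(a*b) := by group
  have I1 : (g*h)*(g*h)*(g*h) = (g*g*g)*((g⁻¹*g⁻¹*h*g*g)*((g⁻¹*h*g)*h)) := by group
  have I2 : g⁻¹*g⁻¹*h*g*g = (h*z)*z := by
    calc g⁻¹*g⁻¹*h*g*g = g⁻¹*(g⁻¹*h*g)*g := by group
      _ = g⁻¹*(h*z)*g := by rw [repl]
      _ = g⁻¹*h*(z*g) := by group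
      _ = g⁻¹*h*(g*z) := by rw [← hzg g]
      _ = (g⁻¹*h*g)*z := by group
      _ = (h*z)*z := by rw [repl]
  have I3 : ((h*z)*z)*((h*z)*h) = (h*h*h)*(z*z*z) := by
    calc ((h*z)*z)*((h*z)*h) = h*(z*(z*(h*(z*h)))) := by group
      _ = h*(z*(z*(z*(h*h)))) := by rw [swap1 h h]
      _ = h*(z*(z*(z*(h*h)))) := rfl
      _ = z*(h*(z*(z*(h*h)))) := by rw [swap1 h (z*(z*(h*h)))]
      _ = z*(z*(h*(z*(h*h)))) := by rw [swap1 h (z*(h*h))]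
      _ = z*(z*(z*(h*(h*h)))) := by rw [swap1 h (h*h)]
      _ = (z*z*z)*(h*(h*h)) := by group
      _ = 1*(h*(h*h)) := by rw [hz3]
      _ = (h*h*h)*1 := by group
      _ = (h*h*h)*(z*z*z) := by rw [hz3]
  have final : (g*h)*(g*h)*(g*h) = (g*g*g)*(h*h*h) := by
    rw [I1, repl, I2, I3]
    rw [show (h*h*h)*(z*z*z) = ((h*z)*z)*((h*z)*h) from I3.symm, I3, hz3, mul_one]
  calc (g*h)^3 = (g*h)*(g*h)*(g*h) := by rw [pow_succ, pow_two]
    _ = (g*g*g)*(h*h*h) := final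
    _ = g^3 * h^3 := by rw [show (g:G)*g*g = g^3 by rw [pow_succ, pow_two],
        show (h:G)*h*h = h^3 by rw [pow_succ, pow_two]]

/-- the cubing homomorphism into the center -/
noncomputable def cubeHom : G →* ↥(center G) where
  toFun g := ⟨g^3, cube_mem_center hm hexp3 g⟩
  map_one' := by ext; simp
  map_mul' g h := by ext; exact cube_mul hm hexp3 g h

/-- the commutator homomorphism attached to x -/
noncomputable def kappa (x : G) : G →* G where
  toFun g := x⁻¹*(g⁻¹*x*g)
  map_one' := by group
  map_mul' g h := by
    show x⁻¹*((g*h)⁻¹*x*(g*h)) = (x⁻¹*(g⁻¹*x*g))*(x⁻¹*(h⁻¹*x*h))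
    set c : G := x⁻¹*(g⁻¹*x*g) with hcdef
    have hcc := commutator_central hm hexp3 x g
    rw [← hcdef] at hcc
    have hcg : ∀ k : G, k * c = c * k := Subgroup.mem_center_iff.mp hcc
    have repl : g⁻¹*x*g = x*c := by rw [hcdef]; group
    calc x⁻¹*((g*h)⁻¹*x*(g*h)) = x⁻¹*(h⁻¹*(g⁻¹*x*g)*h) := by group
      _ = x⁻¹*(h⁻¹*(x*c)*h) := by rw [repl]
      _ = x⁻¹*(h⁻¹*x*(c*h)) := by group
      _ = x⁻¹*(h⁻¹*x*(h*c)) := by rw [← hcg h]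
      _ = (x⁻¹*(h⁻¹*x*h))*c := by group
      _ = c*(x⁻¹*(h⁻¹*x*h)) := by rw [hcg (x⁻¹*(h⁻¹*x*h))]
      _ = (x⁻¹*(g⁻¹*x*g))*(x⁻¹*(h⁻¹*x*h)) := by rw [hcdef]

lemma kappa_ker {x : G} : (kappa hm hexp3 x).ker = centralizer ({x} : Set G) := by
  ext g
  rw [MonoidHom.mem_ker, mem_centralizer_single]
  constructor
  · intro h
    have h0 : x⁻¹*(g⁻¹*x*g) = 1 := h
    have h2 : g⁻¹*x*g = x := by
      calc g⁻¹*x*g = x*(x⁻¹*(g⁻¹*x*g)) := by group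
        _ = x*1 := by rw [h0]
        _ = x := by rw [mul_one]
    calc x * g = g * (g⁻¹*x*g) := by group
      _ = g * x := by rw [h2]
  · intro h
    show x⁻¹*(g⁻¹*x*g) = 1
    rw [show g⁻¹*x*g = g⁻¹*(x*g) by group, h]
    group

lemma card_range_kappa {x : G} (hx : x ∉ center G) :
    Nat.card (kappa hm hexp3 x).range = 3 := by
  have e := (QuotientGroup.quotientKerEquivRange (kappa hm hexp3 x)).toEquiv
  have h1 : Nat.card (G ⧸ (kappa hm hexp3 x).ker) = Nat.card (kappa hm hexp3 x).range :=
    Nat.card_congr e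
  rw [← h1, kappa_ker]
  exact centralizer_index hm hexp3 hx

lemma central_cube_mem_kappa_range {t x : G} (ht : t ∈ center G) (ht3 : t*t*t = 1)
    (hx : x ∉ center G) : t ∈ (kappa hm hexp3 x).range := by
  obtain ⟨y, hxy⟩ := exists_noncomm hx
  have hync : y ∉ center G := noncentral_right hxy
  haveI := centralizer_normal hm hexp3 hync
  have hidx := centralizer_index hm hexp3 hync
  have hxnotC : x ∉ centralizer ({y} : Set G) := by
    intro h
    exact hxy (mem_centralizer_single.mp h).symm
  have htg : ∀ k : G, k * t = t * k := Subgroup.mem_center_iff.mp ht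
  have hx3c : ∀ g : G, x^3 * g = g * x^3 := fun g =>
    (Subgroup.mem_center_iff.mp (cube_mem_center hm hexp3 x) g).symm
  have htA : t ∈ centralizer ({y} : Set G) := center_le_centralizer_single y ht
  have htc : ∀ a ∈ centralizer ({y} : Set G), a * t = t * a := fun a _ => htg a
  have htx : x⁻¹*t*x = t := by
    calc x⁻¹*t*x = x⁻¹*(t*x) := by group
      _ = x⁻¹*(x*t) := by rw [← htg x]
      _ = t := by group
  have hN : (x⁻¹*(x⁻¹*t*x)*x) * (x⁻¹*t*x) * t = 1 := by
    simp only [htx]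
    exact ht3
  obtain ⟨α, hαx, -⟩ := exists_aut hidx hxnotC hx3c htA htc hN
  have hcls : x * t ∈ cls x := by
    rw [orbit_eq_cls hm hexp3 hx, ← hαx]
    exact ⟨α, rfl⟩
  obtain ⟨g, hg⟩ := hcls
  have hg' : g * x * g⁻¹ = x * t := hg
  refine ⟨g⁻¹, ?_⟩
  show x⁻¹*((g⁻¹)⁻¹*x*g⁻¹) = t
  rw [inv_inv, hg']
  group

end MaolP2e

namespace MaolP2f
open MaolAux MaolAux2 MaolAux3 MaolP2 MaolP2b MaolP2c MaolP2d MaolP2e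
set_option linter.unusedSectionVars false
variable {G : Type*} [Group G] [Finite G]

lemma conj_cent (k c : G) (hc : ∀ j : G, j * c = c * j) : k⁻¹ * c * k = c := by
  calc k⁻¹*c*k = k⁻¹*(c*k) := by group
    _ = k⁻¹*(k*c) := by rw [← hc k]
    _ = c := by group

lemma mul_central_cube {c : G} (hc : ∀ j : G, j * c = c * j) (s : G) :
    (s*c)*(s*c)*(s*c) = (s*s*s)*(c*c*c) := by
  calc (s*c)*(s*c)*(s*c) = s*(c*s)*(c*s)*c := by group
    _ = s*(s*c)*(c*s)*c := by rw [← hc s]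
    _ = s*(s*c)*(s*c)*c := by rw [← hc s]
    _ = s*s*(c*s)*(c*c) := by group
    _ = s*s*(s*c)*(c*c) := by rw [← hc s]
    _ = (s*s*s)*(c*c*c) := by group

lemma three_prod {c1 c2 : G} (hc1 : ∀ j : G, j * c1 = c1 * j)
    (hc2 : ∀ j : G, j * c2 = c2 * j) (w : G) :
    (w*c2)*(w*c1)*w = (w*w*w)*(c2*c1) := by
  calc (w*c2)*(w*c1)*w = w*(c2*w)*(c1*w) := by group
    _ = w*(w*c2)*(c1*w) := by rw [← hc2 w]
    _ = w*(w*c2)*(w*c1) := by rw [← hc1 w]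
    _ = w*w*(c2*w)*c1 := by group
    _ = w*w*(w*c2)*c1 := by rw [← hc2 w]
    _ = (w*w*w)*(c2*c1) := by group

variable (hm : maol G = 3) (hexp3 : ∀ q : G ⧸ center G, q ^ 3 = 1)
include hm hexp3

open scoped IsMulCommutative in
lemma stageII_false (hna : ¬ ∀ a b : G, a * b = b * a) : False := by
  obtain ⟨a, b, hab⟩ := by push_neg at hna; exact hna
  have hanc : a ∉ center G := noncentral_left hab
  set c0 : G := a⁻¹*(b⁻¹*a*b) with hc0def
  have hc0cen : c0 ∈ center G := by rw [hc0def]; exact commutator_central hm hexp3 a b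
  have hc0ne : c0 ≠ 1 := by
    intro h
    apply hab
    have h2 : b⁻¹*a*b = a := by
      calc b⁻¹*a*b = a*(a⁻¹*(b⁻¹*a*b)) := by group
        _ = a*c0 := by rw [hc0def]
        _ = a := by rw [h, mul_one]
    calc a*b = b*(b⁻¹*a*b) := by group
      _ = b*a := by rw [h2]
  have hc03 : c0*c0*c0 = 1 := by
    have h := commutator_cube hm hexp3 a b
    rw [← hc0def] at h
    exact h
  set cubeC : ↥(center G) →* ↥(center G) := powMonoidHom 3 with hcubeC
  set zc : ↥(center G) := ⟨c0, hc0cen⟩ with hzcdef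
  have hzc3 : zc^3 = 1 := by
    apply Subtype.ext
    have hcoe : ((zc^3 : ↥(center G)) : G) = c0^3 := by
      rw [SubmonoidClass.coe_pow]
    rw [hcoe, OneMemClass.coe_one,
      show c0^3 = c0*c0*c0 by rw [pow_succ, pow_two]]
    exact hc03
  have hzcne : zc ≠ 1 := fun h => hc0ne (congrArg Subtype.val h)
  haveI : Fact (Nat.Prime 3) := ⟨Nat.prime_three⟩
  have hordzc : orderOf zc = 3 := orderOf_eq_prime hzc3 hzcne
  have hkerle3 : Nat.card cubeC.ker ≤ 3 := by
    have hinj : Function.Injective (fun tt : cubeC.ker =>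
        (⟨(tt.1.1 : G), by
          apply central_cube_mem_kappa_range hm hexp3 tt.1.2 ?_ hanc
          have h3 : tt.1^3 = 1 := tt.2
          have h4 : (tt.1.1)^3 = 1 := by
            have := congrArg Subtype.val h3
            rw [SubmonoidClass.coe_pow] at this
            simpa using this
          rw [show (tt.1.1)^3 = tt.1.1*tt.1.1*tt.1.1 by rw [pow_succ, pow_two]] at h4
          exact h4⟩ : ↥(kappa hm hexp3 a).range)) := by
      intro s t h
      have h2 := congrArg Subtype.val h
      simp only at h2
      exact Subtype.ext (Subtype.ext h2)
    calc Nat.card cubeC.ker ≤ Nat.card ↥(kappa hm hexp3 a).range :=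
          Nat.card_le_card_of_injective _ hinj
      _ = 3 := card_range_kappa hm hexp3 hanc
  have hkerge3 : 3 ≤ Nat.card cubeC.ker := by
    have hle : zpowers zc ≤ cubeC.ker := by
      rw [Subgroup.zpowers_le]
      rw [MonoidHom.mem_ker]
      exact hzc3
    calc (3:ℕ) = Nat.card (zpowers zc) := by rw [Nat.card_zpowers, hordzc]
      _ ≤ Nat.card cubeC.ker := Subgroup.card_le_of_le hle
  have hker3 : Nat.card cubeC.ker = 3 := le_antisymm hkerle3 hkerge3
  have hV3 : cubeC.range.index = 3 := by
    have h1 : cubeC.ker.index = Nat.card cubeC.range :=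
      Nat.card_congr (QuotientGroup.quotientKerEquivRange cubeC).toEquiv
    have c1 := Subgroup.card_mul_index cubeC.ker
    have c2 := Subgroup.card_mul_index cubeC.range
    have hposr : 0 < Nat.card cubeC.range := Nat.card_pos
    rw [hker3] at c1
    have key : Nat.card cubeC.range * cubeC.range.index = Nat.card cubeC.range * 3 := by
      calc Nat.card cubeC.range * cubeC.range.index = Nat.card ↥(center G) := c2
        _ = 3 * cubeC.ker.index := c1.symm
        _ = 3 * Nat.card cubeC.range := by rw [h1]
        _ = Nat.card cubeC.range * 3 := by rw [Nat.mul_comm]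
    exact Nat.eq_of_mul_eq_mul_left hposr key
  set Ψ : G →* (↥(center G) ⧸ cubeC.range) :=
    (QuotientGroup.mk' cubeC.range).comp (cubeHom hm hexp3) with hΨ
  by_cases hcase : ∃ x0, x0 ∉ center G ∧ Ψ x0 = 1
  · -- case A: transvection contradiction
    obtain ⟨x0, hx0nc, hx0⟩ := hcase
    have hmem : cubeHom hm hexp3 x0 ∈ cubeC.range := by
      rw [hΨ] at hx0
      have := (QuotientGroup.eq_one_iff (cubeHom hm hexp3 x0)).mp hx0
      exact this
    obtain ⟨u, hu⟩ := hmem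
    have hval : (u : G)^3 = x0^3 := by
      have h := congrArg Subtype.val hu
      rw [hcubeC] at h
      simpa [cubeHom] using h
    have hu3 : (u:G)*(u:G)*(u:G) = x0*x0*x0 := by
      rw [show (u:G)*(u:G)*(u:G) = (u:G)^3 by rw [pow_succ, pow_two],
        show x0*x0*x0 = x0^3 by rw [pow_succ, pow_two]]
      exact hval
    obtain ⟨y0, hx0y0⟩ := exists_noncomm hx0nc
    have hy0nc : y0 ∉ center G := noncentral_right hx0y0
    haveI := centralizer_normal hm hexp3 hx0nc
    have hidx0 := centralizer_index hm hexp3 hx0nc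
    have hy0notA : y0 ∉ centralizer ({x0} : Set G) := fun h =>
      hx0y0 (mem_centralizer_single.mp h)
    set z0 : G := x0⁻¹*(y0⁻¹*x0*y0) with hz0def
    have hz0cen : z0 ∈ center G := by rw [hz0def]; exact commutator_central hm hexp3 x0 y0
    have hz0g : ∀ k : G, k*z0 = z0*k := Subgroup.mem_center_iff.mp hz0cen
    have hz03 : z0*z0*z0 = 1 := by
      have h := commutator_cube hm hexp3 x0 y0
      rw [← hz0def] at h
      exact h
    have hug : ∀ k : G, k*(u:G)⁻¹ = (u:G)⁻¹*k :=
      Subgroup.mem_center_iff.mp (Subgroup.inv_mem _ u.2)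
    set w : G := x0 * (u:G)⁻¹ with hwdef
    have hwA : w ∈ centralizer ({x0} : Set G) :=
      Subgroup.mul_mem _ (mem_centralizer_single.mpr rfl)
        (center_le_centralizer_single x0 (Subgroup.inv_mem _ u.2))
    have hwc : ∀ a' ∈ centralizer ({x0} : Set G), a' * w = w * a' := by
      intro a' ha'
      have h1 := mem_centralizer_single.mp ha'
      calc a' * w = (a'*x0)*(u:G)⁻¹ := by rw [hwdef]; group
        _ = (x0*a')*(u:G)⁻¹ := by rw [← h1]
        _ = x0*(a'*(u:G)⁻¹) := by group
        _ = x0*((u:G)⁻¹*a') := by rw [hug a']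
        _ = w*a' := by rw [hwdef]; group
    have repl0 : y0⁻¹*x0*y0 = x0*z0 := by rw [hz0def]; group
    have hy03c : ∀ g : G, y0^3*g = g*y0^3 := fun g =>
      (Subgroup.mem_center_iff.mp (cube_mem_center hm hexp3 y0) g).symm
    have r1 : y0⁻¹*w*y0 = w*z0 := by
      calc y0⁻¹*w*y0 = (y0⁻¹*x0*y0)*(y0⁻¹*(u:G)⁻¹*y0) := by rw [hwdef]; group
        _ = (x0*z0)*(u:G)⁻¹ := by rw [repl0, conj_cent y0 (u:G)⁻¹ hug]
        _ = x0*(z0*(u:G)⁻¹) := by group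
        _ = x0*((u:G)⁻¹*z0) := by rw [hug z0]
        _ = w*z0 := by rw [hwdef]; group
    have r2 : y0⁻¹*(w*z0)*y0 = (w*z0)*z0 := by
      calc y0⁻¹*(w*z0)*y0 = (y0⁻¹*w*y0)*(y0⁻¹*z0*y0) := by group
        _ = (w*z0)*z0 := by rw [r1, conj_cent y0 z0 hz0g]
    have hz0z0g : ∀ j : G, j*(z0*z0) = (z0*z0)*j := by
      intro j
      calc j*(z0*z0) = (j*z0)*z0 := by group
        _ = (z0*j)*z0 := by rw [hz0g j]
        _ = z0*(j*z0) := by group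
        _ = z0*(z0*j) := by rw [hz0g j]
        _ = (z0*z0)*j := by group
    have hN0 : (y0⁻¹*(y0⁻¹*w*y0)*y0)*(y0⁻¹*w*y0)*w = 1 := by
      rw [r1, r2]
      rw [show (w*z0)*z0 = w*(z0*z0) by group]
      rw [three_prod hz0g hz0z0g w]
      rw [show (z0*z0)*z0 = z0*z0*z0 by group, hz03, mul_one]
      rw [hwdef, mul_central_cube hug x0]
      rw [hu3.symm]
      group
    obtain ⟨α, hαy0, -⟩ := exists_aut hidx0 hy0notA hy03c hwA hwc hN0
    have hcls : y0 * w ∈ cls y0 := by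
      rw [orbit_eq_cls hm hexp3 hy0nc, ← hαy0]
      exact ⟨α, rfl⟩
    obtain ⟨g, hgpre⟩ := hcls
    have hg' : g * y0 * g⁻¹ = y0 * w := hgpre
    have hwcen : w ∈ center G := by
      have hc := commutator_central hm hexp3 y0 g⁻¹
      rw [inv_inv] at hc
      have he : y0⁻¹*(g*y0*g⁻¹) = w := by rw [hg']; group
      rw [← he]
      exact hc
    apply hx0nc
    rw [show x0 = w*(u:G) by rw [hwdef]; group]
    exact Subgroup.mul_mem _ hwcen u.2
  · -- case B: quotient is cyclic, so G is abelian
    push_neg at hcase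
    have hkerΨ : Ψ.ker = center G := by
      ext g
      constructor
      · intro hg
        by_contra hgnc
        exact hcase g hgnc (MonoidHom.mem_ker.mp hg)
      · intro hg
        rw [MonoidHom.mem_ker, hΨ]
        show (QuotientGroup.mk' cubeC.range) (cubeHom hm hexp3 g) = 1
        rw [QuotientGroup.mk'_apply, QuotientGroup.eq_one_iff]
        refine ⟨⟨g, hg⟩, ?_⟩
        apply Subtype.ext
        rw [hcubeC]
        simp [cubeHom]
    have hdvd : Nat.card (G ⧸ center G) ∣ 3 := by
      calc Nat.card (G ⧸ center G) = Nat.card (G ⧸ Ψ.ker) := by rw [hkerΨ]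
        _ = Nat.card Ψ.range :=
            Nat.card_congr (QuotientGroup.quotientKerEquivRange Ψ).toEquiv
        _ ∣ Nat.card (↥(center G) ⧸ cubeC.range) := Subgroup.card_subgroup_dvd_card _
        _ = 3 := hV3
    have hcyc : IsCyclic (G ⧸ center G) := by
      rcases (Nat.prime_three.eq_one_or_self_of_dvd _ hdvd) with h1 | h3
      · haveI : Subsingleton (G ⧸ center G) := (Nat.card_eq_one_iff_unique.mp h1).1
        exact isCyclic_of_subsingleton
      · exact isCyclic_of_prime_card h3
    apply hna
    haveI := hcyc
    exact commutative_of_cyclic_center_quotient (QuotientGroup.mk' (center G))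
      (by rw [QuotientGroup.ker_mk'])

end MaolP2f

namespace MaolFinal
open MaolAux MaolAux2 MaolAux3 MaolAux3b MaolP2 MaolP2f
set_option linter.unusedSectionVars false
variable {G : Type*} [Group G] [Finite G]

lemma exists_order2 (hm : maol G = 3) (hna : ¬ ∀ a b : G, a * b = b * a) :
    ∃ q : G ⧸ center G, orderOf q = 2 := by
  by_contra hno
  push_neg at hno
  have hexp3 : ∀ q : G ⧸ center G, q^3 = 1 := by
    intro q
    rcases quot_sq_or_cube hm q with h | h
    · have hdvd := orderOf_dvd_of_pow_eq_one h
      have h1 := (Nat.prime_two.eq_one_or_self_of_dvd _ hdvd).resolve_right (hno q)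
      rw [orderOf_eq_one_iff] at h1
      rw [h1, one_pow]
    · exact h
  exact stageII_false hm hexp3 hna

end MaolFinal

theorem stmt_14 (G : Type*) [Group G] [Finite G]
    (hna : ¬ ∀ a b : G, a * b = b * a) (h : maol G = 3) :
    (Set.range fun x : G ⧸ Subgroup.center G => orderOf x) = ({1, 2, 3} : Set ℕ) := by
  ext n
  simp only [Set.mem_range, Set.mem_insert_iff, Set.mem_singleton_iff]
  constructor
  · rintro ⟨q, rfl⟩
    rcases MaolAux.quot_sq_or_cube h q with hq | hq
    · have hdvd := orderOf_dvd_of_pow_eq_one hq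
      rcases (Nat.prime_two.eq_one_or_self_of_dvd _ hdvd) with h1 | h2
      · left; exact h1
      · right; left; exact h2
    · have hdvd := orderOf_dvd_of_pow_eq_one hq
      rcases (Nat.prime_three.eq_one_or_self_of_dvd _ hdvd) with h1 | h3
      · left; exact h1
      · right; right; exact h3
  · rintro (rfl | rfl | rfl)
    · exact ⟨1, orderOf_one⟩
    · exact MaolFinal.exists_order2 h hna
    · exact MaolAux3b.part3_exists_order3 h hna
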